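/- The function f : BM^2 → Pow(BM^2) defined by f(x) := ResM(x) \ {MM} (copy a 2-bit input, allowing metastability to resolve arbitrarily except that not both output bits may be M) has no natural subfunction; consequently f ∉ Fun_S, i.e., no circuit with only simple registers implements f. -/

import Mathlib

set_option linter.unusedVariables false

attribute [local instance] Classical.propDecidable

/-- Signal values: stable `zero`, `one`, and metastable `meta`. -/
inductive BM : Type
  | zero
  | one
  | metastable
  deriving DecidableEq

/-- Embedding of stable Boolean values into `BM`. -/
def BM.ofBool : Bool → BM
  | false => BM.zero
  | true => BM.one

/-- `inResM x y` means `y ∈ ResM(x)`, the set of partial resolutions of `x`. -/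
def inResM {k : ℕ} (x y : Fin k → BM) : Prop :=
  ∀ i, x i = y i ∨ x i = BM.metastable

/-- `inRes x y` means `y ∈ Res(x)`, i.e. `y` is a complete (stable) resolution of `x`. -/
def inRes {k : ℕ} (x y : Fin k → BM) : Prop :=
  inResM x y ∧ ∀ i, y i ≠ BM.metastable

/-- The complete resolutions of `x`, viewed as Boolean words. -/
def boolRes {k : ℕ} (x : Fin k → BM) : Set (Fin k → Bool) :=
  { z | ∀ i, x i = BM.ofBool (z i) ∨ x i = BM.metastable }

/-- The metastable (Kleene) extension `f_M : BM^k → BM` of a Boolean function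
`f : B^k → B`: it outputs a stable value `b` iff all complete resolutions of the
input evaluate to `b` under `f`, and `meta` otherwise. -/
noncomputable def kleene {k : ℕ} (f : (Fin k → Bool) → Bool) (x : Fin k → BM) : BM :=
  if ∀ z ∈ boolRes x, f z = false then BM.zero
  else if ∀ z ∈ boolRes x, f z = true then BM.one
  else BM.metastable

/-- Combinational logic with `m` input nodes: formulas built from inputs,
`BM`-constants (gates of indegree 0), and gates computing the metastable extension
of a Boolean function of their in-neighbors.  (A DAG evaluates exactly like the
formula obtained by unsharing, so this faithfully captures evaluation of
combinational logic DAGs.) -/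
inductive Comb (m : ℕ) : Type
  | input : Fin m → Comb m
  | const : BM → Comb m
  | gate : (j : ℕ) → ((Fin j → Bool) → Bool) → (Fin j → Comb m) → Comb m

/-- Recursive evaluation of combinational logic on input `x ∈ BM^m`. -/
noncomputable def Comb.eval {m : ℕ} (x : Fin m → BM) : Comb m → BM
  | .input i => x i
  | .const b => b
  | .gate _ f cs => kleene f (fun t => (cs t).eval x)

/-- Register types: simple, mask-0, mask-1. -/
inductive RegType : Type
  | simple
  | mask0
  | mask1
  deriving DecidableEq

/-- `regRead t b (o, b')` holds iff a register of type `t` in state `b` can be read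
with read value `o`, moving to state `b'`:  a register in a stable state yields that
state and keeps it; a simple register in state `meta` yields `meta` and stays `meta`;
a mask-`c` register in state `meta` either yields `c` staying in state `meta`, or
yields `meta` changing its state to `1 - c`. -/
def regRead : RegType → BM → BM × BM → Prop
  | _, BM.zero, p => p = (BM.zero, BM.zero)
  | _, BM.one, p => p = (BM.one, BM.one)
  | RegType.simple, BM.metastable, p => p = (BM.metastable, BM.metastable)
  | RegType.mask0, BM.metastable, p => p = (BM.zero, BM.metastable) ∨ p = (BM.metastable, BM.one)
  | RegType.mask1, BM.metastable, p => p = (BM.one, BM.metastable) ∨ p = (BM.metastable, BM.zero)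

/-- A circuit with `m` input, `k` local and `n` output registers: a type for each
register, combinational logic with `m + k` input nodes (one per non-output register)
and `k + n` output nodes (one per non-input register), and an initialization of the
non-input registers. -/
structure Circuit (m k n : ℕ) : Type where
  inType : Fin m → RegType
  locType : Fin k → RegType
  outType : Fin n → RegType
  logic : Fin (k + n) → Comb (m + k)
  init : Fin (k + n) → BM

/-- A state of a circuit: values of input, local, and output registers. -/
structure CState (m k n : ℕ) : Type where
  inp : Fin m → BM
  loc : Fin k → BM
  out : Fin n → BM

/-- A state as a word in `BM^{m+k+n}`. -/
def CState.toVec {m k n : ℕ} (s : CState m k n) : Fin (m + (k + n)) → BM :=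
  Fin.append s.inp (Fin.append s.loc s.out)

/-- Read phase: `o ∈ BM^{m+k}` are possible read values of the non-output registers
in state `s`, and `ι'` the corresponding successor states of the input registers. -/
def ReadRel {m k n : ℕ} (C : Circuit m k n) (s : CState m k n)
    (o : Fin (m + k) → BM) (ι' : Fin m → BM) : Prop :=
  (∀ i : Fin m, regRead (C.inType i) (s.inp i) (o (Fin.castAdd k i), ι' i)) ∧
  (∀ j : Fin k, ∃ st', regRead (C.locType j) (s.loc j) (o (Fin.natAdd m j), st'))

/-- Evaluation phase: `f^G` applied to the read values. -/
noncomputable def evalLogic {m k n : ℕ} (C : Circuit m k n) (o : Fin (m + k) → BM) :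
    Fin (k + n) → BM :=
  fun j => (C.logic j).eval o

/-- `Write^C(s)`: possible values written to the non-input registers. -/
def WriteSet {m k n : ℕ} (C : Circuit m k n) (s : CState m k n) :
    Set (Fin (k + n) → BM) :=
  { w | ∃ o ι', ReadRel C s o ι' ∧ inResM (evalLogic C o) w }

/-- Successor-state relation: read all non-output registers, evaluate the logic,
and write an arbitrary partial resolution of the result to the non-input registers. -/
def Succ {m k n : ℕ} (C : Circuit m k n) (s s' : CState m k n) : Prop :=
  ∃ o ι', ReadRel C s o ι' ∧ s'.inp = ι' ∧
    inResM (evalLogic C o) (Fin.append s'.loc s'.out)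

/-- `reach C r s₀ = S^C_r(s₀)`: states reachable in `r` rounds from `s₀`. -/
def reach {m k n : ℕ} (C : Circuit m k n) : ℕ → CState m k n → Set (CState m k n)
  | 0, s => {s}
  | r + 1, s => { t | ∃ u ∈ reach C r s, Succ C u t }

/-- The initial state of `C` with input `ι`. -/
def initState {m k n : ℕ} (C : Circuit m k n) (ι : Fin m → BM) : CState m k n :=
  ⟨ι, fun j => C.init (Fin.castAdd n j), fun j => C.init (Fin.natAdd k j)⟩

/-- `C_r(ι)`: possible outputs after `r` rounds on input `ι`. -/
def Cout {m k n : ℕ} (C : Circuit m k n) (r : ℕ) (ι : Fin m → BM) :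
    Set (Fin n → BM) :=
  { y | ∃ s ∈ reach C r (initState C ι), y = s.out }

/-- `r` rounds of `C` implement `f` iff `C_r(ι) ⊆ f(ι)` for all inputs `ι`. -/
def Implements {m k n : ℕ} (C : Circuit m k n) (r : ℕ)
    (f : (Fin m → BM) → Set (Fin n → BM)) : Prop :=
  ∀ ι, Cout C r ι ⊆ f ι

/-- All registers of the circuit are simple. -/
def OnlySimple {m k n : ℕ} (C : Circuit m k n) : Prop :=
  (∀ i, C.inType i = RegType.simple) ∧ (∀ j, C.locType j = RegType.simple) ∧
    (∀ j, C.outType j = RegType.simple)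

/-- `Fun_S^r`: functions implementable by `r` rounds of circuits with only simple
registers. -/
def FunS (r m n : ℕ) : Set ((Fin m → BM) → Set (Fin n → BM)) :=
  { f | ∃ k, ∃ C : Circuit m k n, OnlySimple C ∧ Implements C r f }

/-- `Fun_M^r`: functions implementable by `r` rounds of circuits with arbitrary
register types. -/
def FunM (r m n : ℕ) : Set ((Fin m → BM) → Set (Fin n → BM)) :=
  { f | ∃ k, ∃ C : Circuit m k n, Implements C r f }

/-- A pivotal sequence over `BM^N`: consecutive elements differ in exactly one bit,
and that bit is `meta` in one of the two elements. -/
def PivotalSeq {N ℓ : ℕ} (x : Fin (ℓ + 1) → Fin N → BM) : Prop :=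
  ∀ i : Fin ℓ,
    ∃ j : Fin N,
      x i.castSucc j ≠ x i.succ j ∧
      (x i.castSucc j = BM.metastable ∨ x i.succ j = BM.metastable) ∧
      ∀ j' : Fin N, x i.castSucc j' ≠ x i.succ j' → j' = j

/-- A function `f : BM^m → Pow(BM^n)` is natural iff it is bit-wise and closed
(a product of component functions each taking values in `{{0}, {1}, BM}`)
and specific (stabilizing the input restricts the output). -/
def IsNatural {m n : ℕ} (f : (Fin m → BM) → Set (Fin n → BM)) : Prop :=
  (∃ g : Fin n → (Fin m → BM) → Set BM,
      (∀ i x, g i x = {BM.zero} ∨ g i x = {BM.one} ∨ g i x = (Set.univ : Set BM)) ∧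
      (∀ x, f x = { y | ∀ i, y i ∈ g i x })) ∧
  (∀ x y, inRes x y → f y ⊆ f x)

/-- The `i`-th component of the metastable closure of `f : B^m → B^n`. -/
noncomputable def mclosureC {m n : ℕ} (f : (Fin m → Bool) → Fin n → Bool)
    (x : Fin m → BM) (i : Fin n) : Set BM :=
  if ∀ z ∈ boolRes x, f z i = false then {BM.zero}
  else if ∀ z ∈ boolRes x, f z i = true then {BM.one}
  else Set.univ

/-- The metastable closure `[f]_M : BM^m → Pow(BM^n)` of `f : B^m → B^n`. -/
noncomputable def mclosure {m n : ℕ} (f : (Fin m → Bool) → Fin n → Bool)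
    (x : Fin m → BM) : Set (Fin n → BM) :=
  { y | ∀ i, y i ∈ mclosureC f x i }

/-- The function copying a 2-bit input, allowing metastability to resolve to
anything except `MM`. -/
def copyNotMM : (Fin 2 → BM) → Set (Fin 2 → BM) := fun x =>
  { y | inResM x y ∧ y ≠ fun _ => BM.metastable }

lemma inResM_refl {k : ℕ} (x : Fin k → BM) : inResM x x := fun _ => Or.inl rfl

lemma inResM_trans {k : ℕ} {a b c : Fin k → BM} (h1 : inResM a b) (h2 : inResM b c) :
    inResM a c := by
  intro i
  rcases h1 i with h | h
  · rcases h2 i with h' | h'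
    · exact Or.inl (h.trans h')
    · exact Or.inr (h.trans h')
  · exact Or.inr h

lemma boolRes_mono {k : ℕ} {a a' : Fin k → BM} (h : inResM a a') :
    boolRes a' ⊆ boolRes a := by
  intro z hz i
  rcases h i with hi | hi
  · rcases hz i with hz' | hz'
    · exact Or.inl (hi.trans hz')
    · exact Or.inr (hi.trans hz')
  · exact Or.inr hi

lemma boolRes_nonempty {k : ℕ} (a : Fin k → BM) : ∃ z, z ∈ boolRes a := by
  refine ⟨fun i => match a i with | BM.one => true | _ => false, fun i => ?_⟩
  cases h : a i <;> simp [h, BM.ofBool]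

lemma kleene_mono {k : ℕ} {f : (Fin k → Bool) → Bool} {a a' : Fin k → BM}
    (h : inResM a a') : kleene f a = kleene f a' ∨ kleene f a = BM.metastable := by
  unfold kleene
  by_cases h0 : ∀ z ∈ boolRes a, f z = false
  · have h0' : ∀ z ∈ boolRes a', f z = false := fun z hz => h0 z (boolRes_mono h hz)
    rw [if_pos h0, if_pos h0']
    exact Or.inl rfl
  · by_cases h1 : ∀ z ∈ boolRes a, f z = true
    · have h1' : ∀ z ∈ boolRes a', f z = true := fun z hz => h1 z (boolRes_mono h hz)
      have h0' : ¬ ∀ z ∈ boolRes a', f z = false := by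
        obtain ⟨z, hz⟩ := boolRes_nonempty a'
        intro hc
        have hfz := hc z hz
        have hfz' := h1' z hz
        rw [hfz] at hfz'
        exact Bool.false_ne_true hfz'
      rw [if_neg h0, if_neg h0', if_pos h1, if_pos h1']
      exact Or.inl rfl
    · rw [if_neg h0, if_neg h1]
      exact Or.inr rfl

lemma eval_mono {m : ℕ} {x x' : Fin m → BM} (h : inResM x x') (c : Comb m) :
    Comb.eval x c = Comb.eval x' c ∨ Comb.eval x c = BM.metastable := by
  induction c with
  | input i => exact h i
  | const b => exact Or.inl rfl
  | gate j f cs ih =>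
      exact kleene_mono (a := fun t => (cs t).eval x) (a' := fun t => (cs t).eval x') ih

lemma no_natural_sub :
    ¬ ∃ g : (Fin 2 → BM) → Set (Fin 2 → BM),
        IsNatural g ∧ ∀ x, g x ⊆ copyNotMM x := by
  rintro ⟨g, ⟨⟨gc, hgc, hgprod⟩, hspec⟩, hsub⟩
  set MMv : Fin 2 → BM := fun _ => BM.metastable with hMMv
  have hMMnotin : MMv ∉ g MMv := by
    intro hc
    exact (hsub MMv hc).2 rfl
  have hex : ∃ i, BM.metastable ∉ gc i MMv := by
    by_contra hc
    push_neg at hc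
    apply hMMnotin
    rw [hgprod]
    exact fun i => hc i
  obtain ⟨i, hi⟩ := hex
  have hgi : gc i MMv = {BM.zero} ∨ gc i MMv = {BM.one} := by
    rcases hgc i MMv with h | h | h
    · exact Or.inl h
    · exact Or.inr h
    · exact absurd (h ▸ Set.mem_univ BM.metastable) hi
  -- generic argument for a stable constant input
  have key : ∀ b : BM, b = BM.zero ∨ b = BM.one → b ∈ gc i MMv := by
    intro b hb
    set y : Fin 2 → BM := fun _ => b with hy
    have hyres : inRes MMv y := by
      constructor
      · exact fun _ => Or.inr rfl
      · intro j
        rcases hb with h | h <;> simp [hy, h]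
    have hmem : ∀ j, ∃ w, w ∈ gc j y := by
      intro j
      rcases hgc j y with h | h | h
      · exact ⟨BM.zero, h ▸ rfl⟩
      · exact ⟨BM.one, h ▸ rfl⟩
      · exact ⟨BM.zero, h ▸ Set.mem_univ _⟩
    choose w hw using hmem
    have hwg : w ∈ g y := by rw [hgprod]; exact hw
    have hwcopy := hsub y hwg
    have hwy : w = y := by
      funext j
      rcases hwcopy.1 j with h | h
      · exact h.symm
      · exfalso
        rcases hb with h' | h' <;> simp [hy, h'] at h
    have hyg : y ∈ g y := hwy ▸ hwg
    have := hspec MMv y hyres hyg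
    rw [hgprod] at this
    exact this i
  have h0 := key BM.zero (Or.inl rfl)
  have h1 := key BM.one (Or.inr rfl)
  rcases hgi with h | h <;> rw [h] at h0 h1 <;> simp_all

/-- `copyNotMM` has no natural subfunction, and consequently no
circuit with only simple registers implements it. -/
theorem copyNotMM_not_implementable :
    (¬ ∃ g : (Fin 2 → BM) → Set (Fin 2 → BM),
        IsNatural g ∧ ∀ x, g x ⊆ copyNotMM x) ∧
    copyNotMM ∉ FunS 1 2 2 := by
  refine ⟨no_natural_sub, ?_⟩
  rintro ⟨k, C, hS, hImpl⟩
  -- the deterministic read vector and resulting output of the combinational logic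
  set oι : (Fin 2 → BM) → Fin (2 + k) → BM :=
    fun ι => Fin.append ι (fun j => C.init (Fin.castAdd 2 j)) with hoι
  set v : (Fin 2 → BM) → Fin 2 → BM :=
    fun ι i => evalLogic C (oι ι) (Fin.natAdd k i) with hv
  -- every partial resolution of v ι is a possible output
  have hA : ∀ ι y, inResM (v ι) y → y ∈ Cout C 1 ι := by
    intro ι y hy
    refine ⟨⟨ι, fun j => evalLogic C (oι ι) (Fin.castAdd 2 j), y⟩, ?_, rfl⟩
    refine ⟨initState C ι, rfl, oι ι, ι, ⟨?_, ?_⟩, rfl, ?_⟩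
    · intro i
      have : oι ι (Fin.castAdd k i) = ι i := Fin.append_left _ _ _
      rw [this, hS.1 i]
      show regRead RegType.simple (ι i) (ι i, ι i)
      cases ι i <;> simp [regRead]
    · intro j
      refine ⟨C.init (Fin.castAdd 2 j), ?_⟩
      have : oι ι (Fin.natAdd 2 j) = C.init (Fin.castAdd 2 j) := Fin.append_right _ _ _
      rw [this, hS.2.1 j]
      show regRead RegType.simple (C.init (Fin.castAdd 2 j)) _
      cases C.init (Fin.castAdd 2 j) <;> simp [regRead]
    · intro j
      refine Fin.addCases (motive := fun j => evalLogic C (oι ι) j =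
        Fin.append (fun j => evalLogic C (oι ι) (Fin.castAdd 2 j)) y j ∨
        evalLogic C (oι ι) j = BM.metastable) ?_ ?_ j
      · intro j0
        rw [Fin.append_left]
        exact Or.inl rfl
      · intro i0
        rw [Fin.append_right]
        exact hy i0
  -- the resulting natural subfunction
  apply no_natural_sub
  refine ⟨fun ι => {y | inResM (v ι) y}, ⟨⟨?_, ?_, ?_⟩, ?_⟩, ?_⟩
  · exact fun i ι => match v ι i with
      | BM.zero => {BM.zero} | BM.one => {BM.one} | BM.metastable => Set.univ
  · intro i x
    cases h : v x i <;> simp [h]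
  · intro x
    ext y
    show inResM (v x) y ↔ _
    constructor
    · intro h i
      rcases h i with hi | hi <;> cases hc : v x i <;> simp_all [BM.ofBool]
    · intro h i
      have := h i
      cases hc : v x i <;> rw [hc] at this <;> simp_all
  · intro x y hxy z hz
    have hmono : inResM (v x) (v y) := by
      intro i
      have hx : inResM (oι x) (oι y) := by
        intro j
        refine Fin.addCases (motive := fun j => oι x j = oι y j ∨ oι x j = BM.metastable)
          ?_ ?_ j
        · intro i0
          have hx0 : oι x (Fin.castAdd k i0) = x i0 := Fin.append_left _ _ _
          have hy0 : oι y (Fin.castAdd k i0) = y i0 := Fin.append_left _ _ _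
          rw [hx0, hy0]
          exact hxy.1 i0
        · intro j0
          have hx0 : oι x (Fin.natAdd 2 j0) = C.init (Fin.castAdd 2 j0) := Fin.append_right _ _ _
          have hy0 : oι y (Fin.natAdd 2 j0) = C.init (Fin.castAdd 2 j0) := Fin.append_right _ _ _
          rw [hx0, hy0]
          exact Or.inl rfl
      exact eval_mono hx (C.logic (Fin.natAdd k i))
    exact inResM_trans hmono hz
  · intro ι z hz
    exact hImpl ι (hA ι z hz)
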